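/- If a tournament T has no sink (no vertex of out-degree zero), then T has at least two distinct vertices with the second neighborhood property. -/

import Mathlib

variable {V : Type*}

/-- Out-neighborhood of `v`. -/
def Nplus (A : V → V → Prop) (v : V) : Set V := {u | A v u}

/-- In-neighborhood of `v`. -/
def Nminus (A : V → V → Prop) (v : V) : Set V := {u | A u v}

/-- Second out-neighborhood: vertices at directed distance exactly 2 from `v`. -/
def Npp (A : V → V → Prop) (v : V) : Set V :=
  {u | u ≠ v ∧ ¬ A v u ∧ ∃ w, A v w ∧ A w u}

/-- The second neighborhood property. -/
def SNP (A : V → V → Prop) (v : V) : Prop := (Nplus A v).ncard ≤ (Npp A v).ncard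

/-- A digraph (given by its arc relation) has no digons: no 2-cycles (this also rules out loops when stated for `u = v`). -/
def NoDigons (A : V → V → Prop) : Prop := ∀ u v, ¬ (A u v ∧ A v u)

/-- A tournament: an orientation of a complete graph. -/
def IsTournament (A : V → V → Prop) : Prop :=
  (∀ v, ¬ A v v) ∧ ∀ u v : V, u ≠ v → (A u v ↔ ¬ A v u)

/-- `u v` is a missing edge: distinct and non-adjacent. -/
def MissingEdge (A : V → V → Prop) (u v : V) : Prop := u ≠ v ∧ ¬ A u v ∧ ¬ A v u

/-- `x₁y₁` loses to `x₂y₂` (with this labelling of endpoints). -/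
def LosesAt (A : V → V → Prop) (x₁ y₁ x₂ y₂ : V) : Prop :=
  A x₁ x₂ ∧ ¬ A x₁ y₂ ∧ y₂ ∉ Npp A x₁ ∧ A y₁ y₂ ∧ ¬ A y₁ x₂ ∧ x₂ ∉ Npp A y₁

/-- The losing relation between (unordered) missing edges: the arcs of the dependency digraph. -/
def EdgeLoses (A : V → V → Prop) (e e' : Sym2 V) : Prop :=
  ∃ x₁ y₁ x₂ y₂, e = s(x₁, y₁) ∧ e' = s(x₂, y₂) ∧
    MissingEdge A x₁ y₁ ∧ MissingEdge A x₂ y₂ ∧ LosesAt A x₁ y₁ x₂ y₂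

namespace SNPAux

attribute [local instance] Classical.propDecidable

variable {α : Type*}

noncomputable def cnt (p : α → Prop) : List α → ℕ
  | [] => 0
  | x :: t => (if p x then 1 else 0) + cnt p t

noncomputable def wt (A : α → α → Prop) : List α → ℕ
  | [] => 0
  | x :: t => cnt (A x) t + wt A t

noncomputable def cross (A : α → α → Prop) : List α → List α → ℕ
  | [], _ => 0
  | x :: t, Y => cnt (A x) Y + cross A t Y

noncomputable def fil (p : α → Prop) : List α → List α
  | [] => []
  | x :: t => if p x then x :: fil p t else fil p t

noncomputable def phi (p : α → Prop) : List α → ℕ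
  | [] => 0
  | x :: t => cnt p (x :: t) + phi p t

@[simp] lemma cnt_nil (p : α → Prop) : cnt p [] = 0 := rfl
lemma cnt_cons (p : α → Prop) (x : α) (t : List α) :
    cnt p (x :: t) = (if p x then 1 else 0) + cnt p t := rfl

@[simp] lemma wt_nil (A : α → α → Prop) : wt A [] = 0 := rfl
lemma wt_cons (A : α → α → Prop) (x : α) (t : List α) :
    wt A (x :: t) = cnt (A x) t + wt A t := rfl

@[simp] lemma cross_nil (A : α → α → Prop) (Y : List α) : cross A [] Y = 0 := rfl
lemma cross_cons (A : α → α → Prop) (x : α) (t Y : List α) :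
    cross A (x :: t) Y = cnt (A x) Y + cross A t Y := rfl

@[simp] lemma fil_nil (p : α → Prop) : fil p [] = [] := rfl
lemma fil_cons (p : α → Prop) (x : α) (t : List α) :
    fil p (x :: t) = if p x then x :: fil p t else fil p t := rfl

@[simp] lemma phi_nil (p : α → Prop) : phi p [] = 0 := rfl
lemma phi_cons (p : α → Prop) (x : α) (t : List α) :
    phi p (x :: t) = cnt p (x :: t) + phi p t := rfl

lemma cnt_append (p : α → Prop) (l₁ l₂ : List α) :
    cnt p (l₁ ++ l₂) = cnt p l₁ + cnt p l₂ := by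
  induction l₁ with
  | nil => simp
  | cons x t ih => simp [cnt_cons, ih]; ring

lemma cnt_le_length (p : α → Prop) (l : List α) : cnt p l ≤ l.length := by
  induction l with
  | nil => simp
  | cons x t ih =>
    rw [cnt_cons]
    simp only [List.length_cons]
    split <;> omega

lemma cnt_congr {p q : α → Prop} {l : List α} (h : ∀ x ∈ l, p x ↔ q x) :
    cnt p l = cnt q l := by
  induction l with
  | nil => rfl
  | cons x t ih =>
    rw [cnt_cons, cnt_cons, ih (fun y hy => h y (List.mem_cons_of_mem _ hy))]
    have := h x (List.mem_cons_self)
    by_cases hp : p x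
    · rw [if_pos hp, if_pos (this.mp hp)]
    · rw [if_neg hp, if_neg (fun hq => hp (this.mpr hq))]

lemma cnt_perm (p : α → Prop) {l l' : List α} (h : l.Perm l') : cnt p l = cnt p l' := by
  induction h with
  | nil => rfl
  | cons x _ ih => rw [cnt_cons, cnt_cons, ih]
  | swap x y l => rw [cnt_cons, cnt_cons, cnt_cons, cnt_cons]; ring
  | trans _ _ ih₁ ih₂ => rw [ih₁, ih₂]

lemma cnt_eq_length (p : α → Prop) {l : List α} (h : ∀ x ∈ l, p x) :
    cnt p l = l.length := by
  induction l with
  | nil => rfl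
  | cons x t ih =>
    rw [cnt_cons, if_pos (h x (List.mem_cons_self)),
      ih (fun y hy => h y (List.mem_cons_of_mem _ hy))]
    simp [Nat.add_comm]

lemma cnt_eq_zero (p : α → Prop) {l : List α} (h : ∀ x ∈ l, ¬ p x) :
    cnt p l = 0 := by
  induction l with
  | nil => rfl
  | cons x t ih =>
    rw [cnt_cons, if_neg (h x (List.mem_cons_self)),
      ih (fun y hy => h y (List.mem_cons_of_mem _ hy))]

lemma one_le_cnt {p : α → Prop} {l : List α} {x : α} (hx : x ∈ l) (hp : p x) :
    1 ≤ cnt p l := by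
  induction l with
  | nil => simp at hx
  | cons y t ih =>
    rw [cnt_cons]
    rcases List.mem_cons.mp hx with rfl | hx'
    · rw [if_pos hp]; omega
    · have := ih hx'; omega

lemma fil_sublist (p : α → Prop) (l : List α) : (fil p l).Sublist l := by
  induction l with
  | nil => simp
  | cons x t ih =>
    rw [fil_cons]
    split
    · exact ih.cons₂ x
    · exact ih.cons x

lemma mem_fil {p : α → Prop} {l : List α} {x : α} :
    x ∈ fil p l ↔ x ∈ l ∧ p x := by
  induction l with
  | nil => simp
  | cons y t ih =>
    rw [fil_cons]
    split
    · rename_i hpy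
      simp only [List.mem_cons, ih]
      constructor
      · rintro (rfl | ⟨h1, h2⟩)
        · exact ⟨Or.inl rfl, hpy⟩
        · exact ⟨Or.inr h1, h2⟩
      · rintro ⟨rfl | h1, h2⟩
        · exact Or.inl rfl
        · exact Or.inr ⟨h1, h2⟩
    · rename_i hpy
      simp only [List.mem_cons, ih]
      constructor
      · rintro ⟨h1, h2⟩; exact ⟨Or.inr h1, h2⟩
      · rintro ⟨rfl | h1, h2⟩
        · exact absurd h2 hpy
        · exact ⟨h1, h2⟩

lemma fil_nodup (p : α → Prop) {l : List α} (h : l.Nodup) : (fil p l).Nodup :=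
  h.sublist (fil_sublist p l)

lemma length_fil (p : α → Prop) (l : List α) : (fil p l).length = cnt p l := by
  induction l with
  | nil => rfl
  | cons x t ih =>
    rw [fil_cons, cnt_cons]
    split
    · simp [ih]; omega
    · simp [ih]

lemma cnt_fil_parts (p q : α → Prop) (l : List α) :
    cnt p l = cnt p (fil q l) + cnt p (fil (fun x => ¬ q x) l) := by
  induction l with
  | nil => rfl
  | cons x t ih =>
    by_cases hq : q x
    · have e1 : fil q (x :: t) = x :: fil q t := by rw [fil_cons, if_pos hq]
      have e2 : fil (fun y => ¬ q y) (x :: t) = fil (fun y => ¬ q y) t := by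
        rw [fil_cons, if_neg (not_not_intro hq)]
      rw [e1, e2, cnt_cons, cnt_cons, ih]; ring
    · have e1 : fil q (x :: t) = fil q t := by rw [fil_cons, if_neg hq]
      have e2 : fil (fun y => ¬ q y) (x :: t) = x :: fil (fun y => ¬ q y) t := by
        rw [fil_cons, if_pos hq]
      rw [e1, e2, cnt_cons, cnt_cons, ih]; ring

lemma fil_parts_perm (p : α → Prop) (l : List α) :
    (fil p l ++ fil (fun x => ¬ p x) l).Perm l := by
  induction l with
  | nil => simp
  | cons x t ih =>
    by_cases hp : p x
    · have e1 : fil p (x :: t) = x :: fil p t := by rw [fil_cons, if_pos hp]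
      have e2 : fil (fun y => ¬ p y) (x :: t) = fil (fun y => ¬ p y) t := by
        rw [fil_cons, if_neg (not_not_intro hp)]
      rw [e1, e2]
      exact (ih.cons x)
    · have e1 : fil p (x :: t) = fil p t := by rw [fil_cons, if_neg hp]
      have e2 : fil (fun y => ¬ p y) (x :: t) = x :: fil (fun y => ¬ p y) t := by
        rw [fil_cons, if_pos hp]
      rw [e1, e2]
      exact (List.perm_middle).trans (ih.cons x)


variable {A : α → α → Prop}

lemma cross_append_right (A : α → α → Prop) (X Y Z : List α) :
    cross A X (Y ++ Z) = cross A X Y + cross A X Z := by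
  induction X with
  | nil => simp
  | cons x t ih => rw [cross_cons, cross_cons, cross_cons, cnt_append, ih]; ring

lemma cross_cons_right (A : α → α → Prop) (X : List α) (y : α) (Y : List α) :
    cross A X (y :: Y) = cnt (fun b => A b y) X + cross A X Y := by
  induction X with
  | nil => simp
  | cons x t ih =>
    rw [cross_cons, cross_cons, cnt_cons, cnt_cons, ih]; ring

@[simp] lemma cross_nil_right (A : α → α → Prop) (X : List α) : cross A X [] = 0 := by
  induction X with
  | nil => simp
  | cons x t ih => rw [cross_cons, ih]; simp

lemma cross_singleton_right (A : α → α → Prop) (X : List α) (y : α) :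
    cross A X [y] = cnt (fun b => A b y) X := by
  rw [cross_cons_right, cross_nil_right]; ring

lemma cross_perm_right (A : α → α → Prop) (X : List α) {Y Z : List α} (h : Y.Perm Z) :
    cross A X Y = cross A X Z := by
  induction X with
  | nil => simp
  | cons x t ih => rw [cross_cons, cross_cons, cnt_perm _ h, ih]

lemma wt_append (A : α → α → Prop) (X Y : List α) :
    wt A (X ++ Y) = wt A X + wt A Y + cross A X Y := by
  induction X with
  | nil => simp
  | cons x t ih =>
    rw [List.cons_append, wt_cons, wt_cons, cross_cons, cnt_append, ih]; ring

lemma wt_singleton (A : α → α → Prop) (x : α) : wt A [x] = 0 := by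
  rw [wt_cons]; simp

lemma phi_append (p : α → Prop) (X Y : List α) :
    phi p (X ++ Y) = phi p X + phi p Y + X.length * cnt p Y := by
  induction X with
  | nil => simp
  | cons x t ih =>
    rw [List.cons_append, phi_cons, phi_cons, ih, cnt_cons, cnt_cons, cnt_append]
    simp only [List.length_cons]
    ring

lemma phi_eq_zero (p : α → Prop) {l : List α} (h : ∀ x ∈ l, ¬ p x) : phi p l = 0 := by
  induction l with
  | nil => rfl
  | cons x t ih =>
    rw [phi_cons, cnt_eq_zero p h, ih (fun y hy => h y (List.mem_cons_of_mem _ hy))]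

lemma phi_le_sq (p : α → Prop) (l : List α) : phi p l ≤ l.length * l.length := by
  induction l with
  | nil => simp
  | cons x t ih =>
    rw [phi_cons]
    have h1 := cnt_le_length p (x :: t)
    simp only [List.length_cons] at *
    nlinarith

lemma phi_fil_bound (p q : α → Prop) (l : List α) (hp : ∀ x ∈ l, p x → ¬ q x) :
    phi p l ≤ phi p (fil (fun y => ¬ q y) l) + cnt q l * cnt p l := by
  induction l with
  | nil => simp
  | cons x t ih =>
    have ih' := ih (fun y hy => hp y (List.mem_cons_of_mem _ hy))
    by_cases hq : q x
    · have e2 : fil (fun y => ¬ q y) (x :: t) = fil (fun y => ¬ q y) t := by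
        rw [fil_cons, if_neg (not_not_intro hq)]
      have hpx : ¬ p x := fun h => hp x (List.mem_cons_self) h hq
      rw [e2, phi_cons, cnt_cons, cnt_cons, if_neg hpx, if_pos hq]
      have hc := cnt_le_length p t
      nlinarith [Nat.zero_le (cnt p t), Nat.zero_le (cnt q t)]
    · have e2 : fil (fun y => ¬ q y) (x :: t) = x :: fil (fun y => ¬ q y) t := by
        rw [fil_cons, if_pos hq]
      have hzero : cnt p (fil q t) = 0 := by
        apply cnt_eq_zero
        intro y hy
        rcases mem_fil.mp hy with ⟨hyt, hqy⟩
        exact fun hpy => hp y (List.mem_cons_of_mem _ hyt) hpy hqy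
      have hsplit := cnt_fil_parts p q t
      rw [e2, phi_cons, phi_cons, cnt_cons, cnt_cons, cnt_cons, if_neg hq]
      nlinarith [Nat.zero_le (cnt q t), Nat.zero_le (if p x then 1 else 0)]

lemma exists_max_fun {β : Type*} (F : β → ℕ) :
    ∀ (l : List β), l ≠ [] → ∃ m ∈ l, ∀ x ∈ l, F x ≤ F m := by
  intro l
  induction l with
  | nil => intro h; exact absurd rfl h
  | cons x t ih =>
    intro _
    rcases eq_or_ne t [] with rfl | ht
    · exact ⟨x, List.mem_cons_self, by
        intro y hy
        rcases List.mem_cons.mp hy with rfl | h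
        · exact le_refl _
        · simp at h⟩
    · obtain ⟨m, hm, hmax⟩ := ih ht
      by_cases hc : F x ≤ F m
      · exact ⟨m, List.mem_cons_of_mem _ hm, by
          intro y hy
          rcases List.mem_cons.mp hy with rfl | h
          · exact hc
          · exact hmax y h⟩
      · exact ⟨x, List.mem_cons_self, by
          intro y hy
          rcases List.mem_cons.mp hy with rfl | h
          · exact le_refl _
          · exact le_trans (hmax y h) (le_of_not_ge hc)⟩


section Deficiency

variable (O G : α → Prop)

/-- Deficiency of a list: #O-elements minus #G-elements. -/
noncomputable def Dd (l : List α) : ℤ := (cnt O l : ℤ) - (cnt G l : ℤ)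

noncomputable def deltaOG (x : α) : ℤ := if O x then 1 else if G x then -1 else 0

/-- Bad elements: neither O nor G. -/
def isBad (x : α) : Prop := ¬ O x ∧ ¬ G x

noncomputable def badsum : List α → ℤ
  | [] => 0
  | x :: t => badsum t + deltaOG O G x * (cnt (isBad O G) t : ℤ)

noncomputable def sumDB : List α → ℤ
  | [] => 0
  | x :: t => sumDB t + (if isBad O G x then Dd O G (x :: t) else 0)

variable {O G}

lemma Dd_nil : Dd O G ([] : List α) = 0 := by simp [Dd]

lemma Dd_cons (hdisj : ∀ x : α, G x → ¬ O x) (x : α) (t : List α) :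
    Dd O G (x :: t) = deltaOG O G x + Dd O G t := by
  rw [Dd, Dd, cnt_cons, cnt_cons, deltaOG]
  by_cases hO : O x
  · rw [if_pos hO, if_neg (fun hG => hdisj x hG hO), if_pos hO]
    push_cast; ring
  · rw [if_neg hO, if_neg hO]
    by_cases hG : G x
    · rw [if_pos hG, if_pos hG]; push_cast; ring
    · rw [if_neg hG, if_neg hG]; push_cast; ring

lemma badsum_closed (hdisj : ∀ x : α, G x → ¬ O x) (l : List α) :
    badsum O G l = (cnt (isBad O G) l : ℤ) * Dd O G l - sumDB O G l := by
  induction l with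
  | nil => simp [badsum, sumDB, Dd_nil]
  | cons x t ih =>
    rw [show badsum O G (x :: t) = badsum O G t + deltaOG O G x * (cnt (isBad O G) t : ℤ)
        from rfl,
      show sumDB O G (x :: t) = sumDB O G t + (if isBad O G x then Dd O G (x :: t) else 0)
        from rfl,
      ih, Dd_cons hdisj, cnt_cons]
    by_cases hb : isBad O G x
    · rw [if_pos hb, if_pos hb]
      have hdx : deltaOG O G x = 0 := by
        rw [deltaOG, if_neg hb.1, if_neg hb.2]
      rw [hdx]
      push_cast; ring
    · rw [if_neg hb, if_neg hb]
      push_cast; ring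

lemma sumDB_nonpos (l : List α)
    (h : ∀ x t, (x :: t) <:+ l → isBad O G x → Dd O G (x :: t) ≤ 0) :
    sumDB O G l ≤ 0 := by
  induction l with
  | nil => simp [sumDB]
  | cons x t ih =>
    rw [show sumDB O G (x :: t) = sumDB O G t + (if isBad O G x then Dd O G (x :: t) else 0)
        from rfl]
    have h1 : sumDB O G t ≤ 0 := by
      apply ih
      intro y s hs hb
      exact h y s (hs.trans (List.suffix_cons x t)) hb
    by_cases hb : isBad O G x
    · rw [if_pos hb]
      have := h x t (List.suffix_refl _) hb
      omega
    · rw [if_neg hb]; omega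

/-- Key inequality ("M4"): splitting a list into its bad and non-bad parts, with bads in
front, loses at most `badsum` of weight. -/
lemma mix_ge_badsum (A : α → α → Prop) (hdisj : ∀ x : α, G x → ¬ O x) :
    ∀ s : List α,
      (hdom : ∀ b ∈ s, ∀ o ∈ s, isBad O G b → O o → A b o ∧ ¬ A o b) →
      (wt A s : ℤ) + badsum O G s ≤
        (wt A (fil (isBad O G) s) : ℤ) + wt A (fil (fun x => ¬ isBad O G x) s)
          + cross A (fil (isBad O G) s) (fil (fun x => ¬ isBad O G x) s) := by
  intro s
  induction s with
  | nil => intro _; simp [badsum]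
  | cons x t ih =>
    intro hdom
    have ih' := ih (fun b hb o ho => hdom b (List.mem_cons_of_mem _ hb) o (List.mem_cons_of_mem _ ho))
    have hsplit : cnt (A x) t
        = cnt (A x) (fil (isBad O G) t) + cnt (A x) (fil (fun y => ¬ isBad O G y) t) :=
      cnt_fil_parts _ _ _
    have hlenB : (fil (isBad O G) t).length = cnt (isBad O G) t := length_fil _ _
    by_cases hb : isBad O G x
    · have e1 : fil (isBad O G) (x :: t) = x :: fil (isBad O G) t := by
        rw [fil_cons, if_pos hb]
      have e2 : fil (fun y => ¬ isBad O G y) (x :: t) = fil (fun y => ¬ isBad O G y) t := by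
        rw [fil_cons, if_neg (not_not_intro hb)]
      have hdx : deltaOG O G x = 0 := by rw [deltaOG, if_neg hb.1, if_neg hb.2]
      rw [e1, e2, wt_cons, wt_cons, cross_cons,
        show badsum O G (x :: t) = badsum O G t + deltaOG O G x * (cnt (isBad O G) t : ℤ)
          from rfl, hdx]
      push_cast [hsplit]
      push_cast at ih'
      linarith
    · have e1 : fil (isBad O G) (x :: t) = fil (isBad O G) t := by
        rw [fil_cons, if_neg hb]
      have e2 : fil (fun y => ¬ isBad O G y) (x :: t) = x :: fil (fun y => ¬ isBad O G y) t := by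
        rw [fil_cons, if_pos hb]
      rw [e1, e2, wt_cons, wt_cons, cross_cons_right,
        show badsum O G (x :: t) = badsum O G t + deltaOG O G x * (cnt (isBad O G) t : ℤ)
          from rfl]
      -- remaining: cnt (fun b => A b x) (filB t) - cnt (A x) (filB t) ≥ delta x * cntB t
      by_cases hO : O x
      · have hdx : deltaOG O G x = 1 := by rw [deltaOG, if_pos hO]
        have hall : cnt (fun b => A b x) (fil (isBad O G) t) = cnt (isBad O G) t := by
          rw [← hlenB]
          apply cnt_eq_length
          intro b hbmem
          rcases mem_fil.mp hbmem with ⟨hbt, hbb⟩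
          exact (hdom b (List.mem_cons_of_mem _ hbt) x (List.mem_cons_self) hbb hO).1
        have hnone : cnt (A x) (fil (isBad O G) t) = 0 := by
          apply cnt_eq_zero
          intro b hbmem
          rcases mem_fil.mp hbmem with ⟨hbt, hbb⟩
          exact (hdom b (List.mem_cons_of_mem _ hbt) x (List.mem_cons_self) hbb hO).2
        rw [hdx]
        push_cast [hsplit, hall, hnone]
        push_cast at ih'
        linarith
      · have hdx : deltaOG O G x = -1 := by
          rw [deltaOG, if_neg hO, if_pos]
          by_contra hG
          exact hb ⟨hO, hG⟩
        have hle : cnt (A x) (fil (isBad O G) t) ≤ cnt (isBad O G) t := by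
          rw [← hlenB]; exact cnt_le_length _ _
        rw [hdx]
        push_cast [hsplit]
        push_cast at ih'
        have : (0 : ℤ) ≤ cnt (fun b => A b x) (fil (isBad O G) t) := by positivity
        linarith
  end Deficiency

section Move

variable (A : α → α → Prop) (g : α) (G : α → Prop)

/-- Weight change of the restructuring move. -/
lemma move_eq (hdisj : ∀ x, G x → ¬ A g x) (s : List α)
    (htot : ∀ x ∈ s, A x g ↔ ¬ A g x) :
    (wt A (fil (isBad (A g) G) s ++ g :: fil (fun x => ¬ isBad (A g) G x) s) : ℤ)
      = (wt A (s ++ [g]) : ℤ)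
        + ((wt A (fil (isBad (A g) G) s) : ℤ)
            + wt A (fil (fun x => ¬ isBad (A g) G x) s)
            + cross A (fil (isBad (A g) G) s) (fil (fun x => ¬ isBad (A g) G x) s)
            - wt A s)
        + Dd (A g) G s := by
  set B : α → Prop := isBad (A g) G with hB
  -- right side pieces
  have h1 : wt A (s ++ [g]) = wt A s + cnt (fun x => A x g) s := by
    rw [wt_append, wt_singleton, cross_singleton_right]; omega
  have c1 : cnt (fun x => A x g) s = cnt (fun x => ¬ A g x) s :=
    cnt_congr (fun x hx => htot x hx)
  have c2 : cnt (fun x => ¬ A g x) (fil G s) = cnt G s := by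
    rw [cnt_eq_length _ (fun x hx => hdisj x (mem_fil.mp hx).2), length_fil]
  have c3 : cnt (fun x => ¬ A g x) (fil (fun y => ¬ G y) s) = cnt B (fil (fun y => ¬ G y) s) := by
    apply cnt_congr
    intro x hx
    rcases mem_fil.mp hx with ⟨_, hGx⟩
    constructor
    · intro h; exact ⟨h, hGx⟩
    · intro h; exact h.1
  have c4 : cnt B (fil G s) = 0 := by
    apply cnt_eq_zero
    intro x hx
    rcases mem_fil.mp hx with ⟨_, hGx⟩
    exact fun hb => hb.2 hGx
  have c5 : cnt (fun x => ¬ A g x) s = cnt G s + cnt B s := by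
    rw [cnt_fil_parts (fun x => ¬ A g x) G s, c2, c3,
      cnt_fil_parts B G s, c4]
    omega
  -- left side pieces
  have l1 : wt A (fil B s ++ g :: fil (fun x => ¬ B x) s)
      = wt A (fil B s) + wt A (fil (fun x => ¬ B x) s)
        + cnt (A g) (fil (fun x => ¬ B x) s)
        + cnt (fun b => A b g) (fil B s)
        + cross A (fil B s) (fil (fun x => ¬ B x) s) := by
    have : g :: fil (fun x => ¬ B x) s = [g] ++ fil (fun x => ¬ B x) s := rfl
    rw [this, wt_append, wt_append, wt_singleton, cross_append_right,
      cross_singleton_right, cross_cons, cross_nil]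
    ring
  have l2 : cnt (fun b => A b g) (fil B s) = cnt B s := by
    rw [← length_fil B s]
    apply cnt_eq_length
    intro b hbmem
    rcases mem_fil.mp hbmem with ⟨hbs, hbb⟩
    exact (htot b hbs).mpr hbb.1
  have l3 : cnt (A g) (fil B s) = 0 := by
    apply cnt_eq_zero
    intro b hbmem
    exact (mem_fil.mp hbmem).2.1
  have l4 : cnt (A g) (fil (fun x => ¬ B x) s) = cnt (A g) s := by
    rw [cnt_fil_parts (A g) B s, l3]
    omega
  rw [l1, l2, l4, h1, c1, c5, Dd]
  push_cast
  ring

end Move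

section SuffixClaim

variable (A : α → α → Prop) (g : α) (G : α → Prop)

lemma suffix_claim (K : List α)
    (hdisj : ∀ x, G x → ¬ A g x)
    (hmed : ∀ M', M'.Perm (K ++ [g]) → wt A M' ≤ wt A (K ++ [g]))
    (htot : ∀ x ∈ K, A x g ↔ ¬ A g x)
    (hbo : ∀ b ∈ K, ∀ o ∈ K, A g o → ¬ A g b → ¬ A o b → A b o)
    (hclosed : ∀ b ∈ K, ∀ o ∈ K, A g o → A o b → ¬ A g b → G b) :
    ∀ S, S <:+ K → Dd (A g) G S ≤ 0 := by
  set B : α → Prop := isBad (A g) G with hB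
  suffices h : ∀ n : ℕ, ∀ S : List α, S.length ≤ n → S <:+ K → Dd (A g) G S ≤ 0 by
    intro S hS; exact h S.length S le_rfl hS
  intro n
  induction n with
  | zero =>
    intro S hlen _
    have : S = [] := List.length_eq_zero_iff.mp (Nat.le_zero.mp hlen)
    rw [this, Dd_nil]
  | succ n ih =>
    intro S hlen hSK
    by_contra hcon
    push_neg at hcon
    have hDd1 : 1 ≤ Dd (A g) G S := hcon
    -- S is nonempty
    obtain ⟨x, t, rfl⟩ : ∃ x t, S = x :: t := by
      cases S with
      | nil => rw [Dd_nil] at hcon; exact absurd hcon (by norm_num)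
      | cons x t => exact ⟨x, t, rfl⟩
    have hsubset : ∀ y ∈ x :: t, y ∈ K := fun y hy => hSK.sublist.subset hy
    have htsuffix : t <:+ K := (List.suffix_cons x t).trans hSK
    have htlen : t.length ≤ n := by
      have := hlen; simp only [List.length_cons] at this; omega
    have hDdt : Dd (A g) G t ≤ 0 := ih t htlen htsuffix
    -- head is not bad
    have hxnotbad : ¬ B x := by
      intro hbx
      have : Dd (A g) G (x :: t) = Dd (A g) G t := by
        rw [Dd_cons hdisj, deltaOG, if_neg hbx.1, if_neg hbx.2]; ring
      omega
    -- set up the move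
    obtain ⟨Pre, hPre⟩ := hSK
    have hKassoc : K ++ [g] = Pre ++ ((x :: t) ++ [g]) := by
      rw [← hPre, List.append_assoc]
    have hpermpart : (fil B (x :: t) ++ g :: fil (fun y => ¬ B y) (x :: t)).Perm
        ((x :: t) ++ [g]) := by
      have p1 : (fil B (x :: t) ++ g :: fil (fun y => ¬ B y) (x :: t)).Perm
          (g :: (fil B (x :: t) ++ fil (fun y => ¬ B y) (x :: t))) := List.perm_middle
      have p2 : (fil B (x :: t) ++ fil (fun y => ¬ B y) (x :: t)).Perm (x :: t) :=
        fil_parts_perm B (x :: t)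
      have p3 : ((x :: t) ++ [g]).Perm (g :: (x :: t)) := by
        have := @List.perm_middle α g (x :: t) []
        simpa using this
      exact (p1.trans (p2.cons g)).trans p3.symm
    have hM2perm : (Pre ++ (fil B (x :: t) ++ g :: fil (fun y => ¬ B y) (x :: t))).Perm
        (K ++ [g]) := by
      rw [hKassoc]
      exact hpermpart.append_left Pre
    have hwle := hmed _ hM2perm
    rw [hKassoc] at hwle
    rw [wt_append A Pre (fil B (x :: t) ++ g :: fil (fun y => ¬ B y) (x :: t)),
      wt_append A Pre ((x :: t) ++ [g]),
      cross_perm_right A Pre hpermpart] at hwle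
    have hwle1 : wt A (fil B (x :: t) ++ g :: fil (fun y => ¬ B y) (x :: t))
        ≤ wt A ((x :: t) ++ [g]) := by omega
    have hwle2 : (wt A (fil B (x :: t) ++ g :: fil (fun y => ¬ B y) (x :: t)) : ℤ)
        ≤ (wt A ((x :: t) ++ [g]) : ℤ) := by exact_mod_cast hwle1
    rw [hB] at hwle2
    -- move identity
    have hmove := move_eq A g G hdisj (x :: t) (fun y hy => htot y (hsubset y hy))
    -- M4
    have hdom : ∀ b ∈ x :: t, ∀ o ∈ x :: t, isBad (A g) G b → A g o → A b o ∧ ¬ A o b := by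
      intro b hb o ho hbb hgo
      have hnAob : ¬ A o b := by
        intro hob
        exact hbb.2 (hclosed b (hsubset b hb) o (hsubset o ho) hgo hob hbb.1)
      exact ⟨hbo b (hsubset b hb) o (hsubset o ho) hgo hbb.1 hnAob, hnAob⟩
    have hmix := mix_ge_badsum A hdisj (x :: t) hdom
    -- badsum ≥ 0
    have hbadsum : 0 ≤ badsum (A g) G (x :: t) := by
      rw [badsum_closed hdisj]
      have hsum : sumDB (A g) G (x :: t) ≤ 0 := by
        apply sumDB_nonpos
        intro y r hyr hbady
        have hDdyr : Dd (A g) G (y :: r) = Dd (A g) G r := by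
          rw [Dd_cons hdisj, deltaOG, if_neg hbady.1, if_neg hbady.2]; ring
        have hproper : (y :: r) ≠ x :: t := by
          intro he
          injection he with h1 h2
          exact hxnotbad (h1 ▸ hbady)
        have hyrt : (y :: r) <:+ t := by
          rcases List.suffix_cons_iff.mp hyr with he | h
          · exact absurd he hproper
          · exact h
        have hrK : r <:+ K := ((List.suffix_cons y r).trans hyrt).trans htsuffix
        have hrlen : r.length ≤ n := by
          have := hyrt.length_le
          simp only [List.length_cons] at this ⊢
          omega
        rw [hDdyr]
        exact ih r hrlen hrK
      have h0 : (0 : ℤ) ≤ (cnt (isBad (A g) G) (x :: t) : ℤ) := by positivity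
      nlinarith
    omega
end SuffixClaim


section Ncard

lemma length_le_ncard (S : Set α) (hS : S.Finite) (l : List α)
    (hn : l.Nodup) (hm : ∀ x ∈ l, x ∈ S) : l.length ≤ S.ncard := by
  classical
  have hsub : ↑l.toFinset ⊆ S := by
    intro x hx
    exact hm x (by simpa using hx)
  calc l.length = l.toFinset.card := (List.toFinset_card_of_nodup hn).symm
    _ = (↑l.toFinset : Set α).ncard := (Set.ncard_coe_finset _).symm
    _ ≤ S.ncard := Set.ncard_le_ncard hsub hS

lemma ncard_eq_cnt (S : Set α) (l : List α) (hn : l.Nodup)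
    (hm : ∀ x ∈ S, x ∈ l) : S.ncard = cnt (fun x => x ∈ S) l := by
  classical
  have e : S = ↑((fil (fun y => y ∈ S) l).toFinset) := by
    ext x
    simp only [Finset.coe_sort_coe, List.coe_toFinset, Set.mem_setOf_eq]
    constructor
    · intro hx; exact mem_fil.mpr ⟨hm x hx, hx⟩
    · intro hx; exact (mem_fil.mp hx).2
  have h2 := congrArg Set.ncard e
  rw [Set.ncard_coe_finset, List.toFinset_card_of_nodup (fil_nodup _ hn), length_fil] at h2
  exact h2

end Ncard

end SNPAux

/-- A tournament with no sink has at least two vertices with the SNP. -/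
theorem tournament_no_sink_two_SNP_vertices [Fintype V] [Nonempty V]
    (A : V → V → Prop) (hT : IsTournament A)
    (hNoSink : ∀ v : V, ∃ u : V, A v u) :
    ∃ v w : V, v ≠ w ∧ SNP A v ∧ SNP A w := by
  classical
  open SNPAux in
  obtain ⟨hirr, htneq⟩ := hT
  -- ground list
  set gl : List V := (Finset.univ : Finset V).toList with hgl
  have hglnodup : gl.Nodup := Finset.nodup_toList _
  have hglmem : ∀ v : V, v ∈ gl := fun v => Finset.mem_toList.mpr (Finset.mem_univ v)
  have hglne : gl ≠ [] := by
    intro h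
    have := hglmem (Classical.arbitrary V)
    rw [h] at this
    simp at this
  -- a median order L of T
  have hglperm : gl ∈ gl.permutations := List.mem_permutations.mpr (List.Perm.refl gl)
  obtain ⟨L, hLmem, hLmax⟩ :=
    exists_max_fun (wt A) gl.permutations (List.ne_nil_of_mem hglperm)
  have hLperm : L.Perm gl := List.mem_permutations.mp hLmem
  have hmedL : ∀ M', M'.Perm L → wt A M' ≤ wt A L := by
    intro M' hM'
    exact hLmax M' (List.mem_permutations.mpr (hM'.trans hLperm))
  have hLnodup : L.Nodup := (hLperm.nodup_iff).mpr hglnodup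
  have hLmem' : ∀ v : V, v ∈ L := fun v => (hLperm.mem_iff).mpr (hglmem v)
  have hLne : L ≠ [] := by
    intro h; have := hLmem' (Classical.arbitrary V); rw [h] at this; simp at this
  obtain ⟨K, f, rfl⟩ : ∃ K f, L = K ++ [f] := by
    rcases List.eq_nil_or_concat L with h | ⟨K, f, h⟩
    · exact absurd h hLne
    · exact ⟨K, f, by rw [h, List.concat_eq_append]⟩
  rw [List.nodup_append] at hLnodup
  obtain ⟨hKnodup, -, hKdisj⟩ := hLnodup
  have hfK : f ∉ K := fun h => hKdisj f h f (List.mem_singleton.mpr rfl) rfl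
  have hKmem : ∀ v : V, v ≠ f → v ∈ K := by
    intro v hv
    rcases List.mem_append.mp (hLmem' v) with h | h
    · exact h
    · exact absurd (List.mem_singleton.mp h) hv
  have hKne : ∀ x ∈ K, x ≠ f := fun x hx he => hfK (he ▸ hx)
  -- SNP f
  have hDdK := suffix_claim A f (fun u => u ∈ Npp A f) K
    (fun x hx => hx.2.1)
    hmedL
    (fun x hx => htneq x f (hKne x hx))
    (fun b hb o ho hgo hgb hob => (htneq b o (by rintro rfl; exact hgb hgo)).mpr hob)
    (fun b hb o ho hgo hob hgb => ⟨hKne b hb, hgb, o, hgo, hob⟩)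
    K (List.suffix_refl K)
  have hNplusf : (Nplus A f).ncard = cnt (A f) K := by
    rw [ncard_eq_cnt (Nplus A f) K hKnodup
      (fun x hx => hKmem x (fun he => hirr f (he ▸ hx)))]
    exact cnt_congr (fun x _ => Iff.rfl)
  have hNppf : (Npp A f).ncard = cnt (fun u => u ∈ Npp A f) K :=
    ncard_eq_cnt (Npp A f) K hKnodup (fun x hx => hKmem x hx.1)
  have hSNPf : SNP A f := by
    rw [SNP, hNplusf, hNppf]
    rw [Dd] at hDdK
    omega
  -- K is nonempty
  have hKne' : K ≠ [] := by
    intro h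
    obtain ⟨u, hu⟩ := hNoSink f
    have hune : u ≠ f := fun he => hirr f (he ▸ hu)
    have := hKmem u hune
    rw [h] at this
    simp at this
  -- K is a median order of T - f
  have hcrossf : ∀ X : List V, X.Perm K → cross A X [f] = cross A K [f] := by
    intro X hX
    rw [cross_singleton_right, cross_singleton_right, cnt_perm _ hX]
  have hmedK : ∀ X, X.Perm K → wt A X ≤ wt A K := by
    intro X hX
    have h1 := hmedL (X ++ [f]) (hX.append_right [f])
    rw [wt_append, wt_append, hcrossf X hX] at h1
    omega
  -- maximize the potential among median orders of T - f
  set NN : ℕ := gl.length * gl.length + 1 with hNN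
  set F : List V → ℕ := fun l => NN * wt A l + phi (A f) l with hF
  have hKperm : K ∈ K.permutations := List.mem_permutations.mpr (List.Perm.refl K)
  obtain ⟨Ks, hKsmem, hKsmax'⟩ :=
    exists_max_fun F K.permutations (List.ne_nil_of_mem hKperm)
  have hKsperm : Ks.Perm K := List.mem_permutations.mp hKsmem
  have hKsmax : ∀ X, X.Perm K → F X ≤ F Ks :=
    fun X hX => hKsmax' X (List.mem_permutations.mpr hX)
  have hlenle : ∀ X : List V, X.Perm K → X.length * X.length < NN := by
    intro X hX
    have h1 : X.length = K.length := hX.length_eq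
    have h2 : K.length + 1 = gl.length := by
      have := hLperm.length_eq
      simpa using this.symm ▸ (by simp : (K ++ [f]).length = K.length + 1).symm
    nlinarith [Nat.zero_le (K.length)]
  have hwtKs : wt A Ks = wt A K := by
    have h1 : wt A Ks ≤ wt A K := hmedK Ks hKsperm
    have h2 : F K ≤ F Ks := hKsmax K (List.Perm.refl K)
    by_contra hne
    have h3 : wt A Ks + 1 ≤ wt A K := by omega
    have h4 : phi (A f) K ≤ K.length * K.length := phi_le_sq _ _
    have h5 : phi (A f) Ks ≤ Ks.length * Ks.length := phi_le_sq _ _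
    have h6 := hlenle K (List.Perm.refl K)
    have h7 := hlenle Ks hKsperm
    rw [hF] at h2
    simp only at h2
    nlinarith
  have hmedKs : ∀ X, X.Perm Ks → wt A X ≤ wt A Ks := by
    intro X hX
    rw [hwtKs]
    exact hmedK X (hX.trans hKsperm)
  have hKsne : Ks ≠ [] := by
    intro h
    rw [h] at hKsperm
    exact hKne' (hKsperm.nil_eq).symm
  obtain ⟨P, g, rfl⟩ : ∃ P g, Ks = P ++ [g] := by
    rcases List.eq_nil_or_concat Ks with h | ⟨P, g, h⟩
    · exact absurd h hKsne
    · exact ⟨P, g, by rw [h, List.concat_eq_append]⟩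
  have hKsnodup : (P ++ [g]).Nodup := (hKsperm.nodup_iff).mpr hKnodup
  rw [List.nodup_append] at hKsnodup
  obtain ⟨hPnodup, -, hPdisj⟩ := hKsnodup
  have hgP : g ∉ P := fun h => hPdisj g h g (List.mem_singleton.mpr rfl) rfl
  have hKsK : ∀ x, x ∈ P ++ [g] ↔ x ∈ K := fun x => hKsperm.mem_iff
  have hgK : g ∈ K := (hKsK g).mp (List.mem_append.mpr (Or.inr (List.mem_singleton.mpr rfl)))
  have hgf : g ≠ f := hKne g hgK
  have hPmem : ∀ x ∈ P, x ∈ K := fun x hx => (hKsK x).mp (List.mem_append.mpr (Or.inl hx))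
  have hPnef : ∀ x ∈ P, x ≠ f := fun x hx => hKne x (hPmem x hx)
  have hPneg : ∀ x ∈ P, x ≠ g := fun x hx he => hgP (he ▸ hx)
  have hPcover : ∀ v : V, v ≠ f → v ≠ g → v ∈ P := by
    intro v hvf hvg
    rcases List.mem_append.mp ((hKsK v).mpr (hKmem v hvf)) with h | h
    · exact h
    · exact absurd (List.mem_singleton.mp h) hvg
  -- (P ++ [g]) ++ [f] is a median order of T
  have hwtKsf : wt A ((P ++ [g]) ++ [f]) = wt A (K ++ [f]) := by
    rw [wt_append, wt_append A K [f], hcrossf _ hKsperm, hwtKs]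
  have hmedKsf : ∀ X, X.Perm ((P ++ [g]) ++ [f]) → wt A X ≤ wt A ((P ++ [g]) ++ [f]) := by
    intro X hX
    rw [hwtKsf]
    exact hmedL X (hX.trans ((hKsperm.append_right [f])))
  -- g dominates f
  have hAgf : A g f := by
    by_contra hngf
    have hAfg : A f g := (htneq f g (Ne.symm hgf)).mpr (fun h => hngf h)
    have hperm : (P ++ [f, g]).Perm ((P ++ [g]) ++ [f]) := by
      have : (P ++ [g]) ++ [f] = P ++ [g, f] := by simp
      rw [this]
      exact (List.Perm.swap g f []).append_left P
    have hle := hmedKsf _ hperm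
    have e1 : (P ++ [g]) ++ [f] = P ++ [g, f] := by simp
    rw [e1, wt_append, wt_append,
      cross_perm_right A P (show ([f, g] : List V).Perm [g, f] from List.Perm.swap g f [])] at hle
    have e2 : wt A [f, g] = (if A f g then 1 else 0) := by
      rw [wt_cons, wt_singleton, cnt_cons, cnt_nil]; omega
    have e3 : wt A [g, f] = (if A g f then 1 else 0) := by
      rw [wt_cons, wt_singleton, cnt_cons, cnt_nil]; omega
    rw [e2, e3, if_pos hAfg, if_neg hngf] at hle
    omega
  have hnAfg : ¬ A f g := fun h => ((htneq f g (Ne.symm hgf)).mp h) hAgf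
  -- the second-neighborhood predicate for g with witnesses avoiding f
  set PG : V → Prop := fun u => ¬ A g u ∧ u ≠ g ∧ ∃ w, w ≠ f ∧ A g w ∧ A w u with hPG
  have hmedP : ∀ M', M'.Perm (P ++ [g]) → wt A M' ≤ wt A (P ++ [g]) := hmedKs
  have hDdP := suffix_claim A g PG P
    (fun x hx => hx.1)
    hmedP
    (fun x hx => htneq x g (hPneg x hx))
    (fun b hb o ho hgo hgb hob => (htneq b o (by rintro rfl; exact hgb hgo)).mpr hob)
    (fun b hb o ho hgo hob hgb =>
      ⟨hgb, hPneg b hb, o, hPnef o ho, hgo, hob⟩)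
  have hDdPP := hDdP P (List.suffix_refl P)
  have hac : cnt (A g) P ≤ cnt PG P := by
    rw [Dd] at hDdPP
    omega
  -- ncard of Nplus g
  have hPfnodup : (P ++ [f]).Nodup := by
    rw [List.nodup_append]
    exact ⟨hPnodup, List.nodup_singleton f,
      fun a ha b hb => by rw [List.mem_singleton.mp hb]; exact hPnef a ha⟩
  have hNplusg : (Nplus A g).ncard = cnt (A g) P + 1 := by
    rw [ncard_eq_cnt (Nplus A g) (P ++ [f]) hPfnodup
      (fun x hx => by
        have hxg : x ≠ g := fun he => hirr g (he ▸ hx)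
        rcases eq_or_ne x f with rfl | hxf
        · exact List.mem_append.mpr (Or.inr (List.mem_singleton.mpr rfl))
        · exact List.mem_append.mpr (Or.inl (hPcover x hxf hxg)))]
    rw [show cnt (fun x => x ∈ Nplus A g) (P ++ [f]) = cnt (A g) (P ++ [f]) from
      cnt_congr (fun x _ => Iff.rfl)]
    rw [cnt_append, cnt_cons, cnt_nil, if_pos hAgf]
  -- PG elements are in Npp g
  have hPGmem : ∀ x, PG x → x ∈ Npp A g := by
    intro x hx
    exact ⟨hx.2.1, hx.1, hx.2.2.choose, hx.2.2.choose_spec.2.1, hx.2.2.choose_spec.2.2⟩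
  have hNppfin : (Npp A g).Finite := Set.toFinite _
  have hcntPG : cnt PG P ≤ (Npp A g).ncard := by
    rw [← length_fil PG P]
    apply length_le_ncard _ hNppfin _ (fil_nodup _ hPnodup)
    intro x hx
    exact hPGmem x (mem_fil.mp hx).2
  -- case analysis
  rcases lt_or_eq_of_le hac with hlt | heq
  · -- strict: g is SNP
    refine ⟨f, g, Ne.symm hgf, hSNPf, ?_⟩
    rw [SNP, hNplusg]
    omega
  · by_cases hBC : ∃ u, A f u ∧ A u g ∧ ¬ PG u
    · -- extra second-neighbor via f
      obtain ⟨u, hfu, hug, hnPGu⟩ := hBC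
      have hug' : u ≠ g := fun he => hirr g (he ▸ hug)
      have hnAgu : ¬ A g u := fun h => ((htneq g u (Ne.symm hug')).mp h) hug
      have huNpp : u ∈ Npp A g := ⟨hug', hnAgu, f, hAgf, hfu⟩
      have hlistmem : ∀ x ∈ fil PG P ++ [u], x ∈ Npp A g := by
        intro x hx
        rcases List.mem_append.mp hx with h | h
        · exact hPGmem x (mem_fil.mp h).2
        · rw [List.mem_singleton.mp h]; exact huNpp
      have hlistnodup : (fil PG P ++ [u]).Nodup := by
        rw [List.nodup_append]
        refine ⟨fil_nodup _ hPnodup, List.nodup_singleton u, ?_⟩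
        intro a ha b hb he
        rw [List.mem_singleton.mp hb] at he
        rw [he] at ha
        exact hnPGu (mem_fil.mp ha).2
      have hlen := length_le_ncard (Npp A g) hNppfin _ hlistnodup hlistmem
      rw [List.length_append, List.length_singleton, length_fil] at hlen
      refine ⟨f, g, Ne.symm hgf, hSNPf, ?_⟩
      rw [SNP, hNplusg]
      omega
    · -- impossible: contradicts maximality of the potential
      exfalso
      push_neg at hBC
      set B : V → Prop := isBad (A g) PG with hB
      have hchi : ∀ x ∈ P, A f x → ¬ B x := by
        intro x hx hfx hbx
        by_cases hgx : A g x
        · exact hbx.1 hgx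
        · have : A x g := (htneq x g (hPneg x hx)).mpr hgx
          exact hbx.2 (hBC x hfx this)
      -- the restructured order
      set M2 : List V := fil B P ++ g :: fil (fun y => ¬ B y) P with hM2
      have hM2perm : M2.Perm (P ++ [g]) := by
        have p1 : M2.Perm (g :: (fil B P ++ fil (fun y => ¬ B y) P)) := List.perm_middle
        have p2 : (fil B P ++ fil (fun y => ¬ B y) P).Perm P := fil_parts_perm B P
        have p3 : ((P ++ [g]) : List V).Perm (g :: P) := by
          have := @List.perm_middle V g P []
          simpa using this
        exact (p1.trans (p2.cons g)).trans p3.symm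
      have hwtM2le : wt A M2 ≤ wt A (P ++ [g]) := hmedKs M2 hM2perm
      -- the move identity
      have hmove := move_eq A g PG (fun x hx => hx.1) P
        (fun x hx => htneq x g (hPneg x hx))
      -- mix is at least badsum
      have hdom : ∀ b ∈ P, ∀ o ∈ P, isBad (A g) PG b → A g o → A b o ∧ ¬ A o b := by
        intro b hb o ho hbb hgo
        have hnAob : ¬ A o b := by
          intro hob
          exact hbb.2 ⟨hbb.1, hPneg b hb, o, hPnef o ho, hgo, hob⟩
        exact ⟨(htneq b o (by rintro rfl; exact hbb.1 hgo)).mpr hnAob, hnAob⟩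
      have hmix := mix_ge_badsum A (fun x (hx : PG x) => hx.1) P hdom
      have hbadsum : 0 ≤ badsum (A g) PG P := by
        rw [badsum_closed (fun x (hx : PG x) => hx.1)]
        have hsum : sumDB (A g) PG P ≤ 0 := by
          apply sumDB_nonpos
          intro y r hyr hbady
          have : Dd (A g) PG (y :: r) = Dd (A g) PG r := by
            rw [Dd_cons (fun x (hx : PG x) => hx.1), deltaOG,
              if_neg hbady.1, if_neg hbady.2]
            ring
          rw [this]
          exact hDdP r ((List.suffix_cons y r).trans hyr)
        have hDd0 : Dd (A g) PG P = 0 := by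
          rw [Dd, heq]; ring
        rw [hDd0]
        simp
        omega
      have hDd0 : Dd (A g) PG P = 0 := by rw [Dd, heq]; ring
      have hwtM2ge : wt A (P ++ [g]) ≤ wt A M2 := by
        have : (wt A (P ++ [g]) : ℤ) ≤ (wt A M2 : ℤ) := by
          rw [hM2, hB]
          rw [hmove, hDd0]
          have := hmix
          linarith
        exact_mod_cast this
      have hwtM2 : wt A M2 = wt A (P ++ [g]) := le_antisymm hwtM2le hwtM2ge
      -- potential strictly increases
      obtain ⟨u0, hu0⟩ := hNoSink f
      have hu0f : u0 ≠ f := fun he => hirr f (he ▸ hu0)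
      have hu0g : u0 ≠ g := fun he => hnAfg (he ▸ hu0)
      have hu0P : u0 ∈ P := hPcover u0 hu0f hu0g
      have hcntpos : 1 ≤ cnt (A f) P := one_le_cnt hu0P hu0
      have hphiKs : phi (A f) (P ++ [g]) = phi (A f) P := by
        rw [phi_append, phi_cons, phi_nil, cnt_cons, cnt_nil, if_neg hnAfg]
        omega
      have hcntfilB : cnt (A f) (fil B P) = 0 := by
        apply cnt_eq_zero
        intro x hx
        rcases mem_fil.mp hx with ⟨hxP, hxB⟩
        exact fun hfx => hchi x hxP hfx hxB
      have hcntfilnB : cnt (A f) (fil (fun y => ¬ B y) P) = cnt (A f) P := by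
        have := cnt_fil_parts (A f) B P
        omega
      have hphifilB : phi (A f) (fil B P) = 0 := by
        apply phi_eq_zero
        intro x hx
        rcases mem_fil.mp hx with ⟨hxP, hxB⟩
        exact fun hfx => hchi x hxP hfx hxB
      have hphiM2 : phi (A f) M2
          = phi (A f) (fil (fun y => ¬ B y) P) + cnt (A f) P
            + cnt B P * cnt (A f) P := by
        rw [hM2]
        have e0 : (g :: fil (fun y => ¬ B y) P) = [g] ++ fil (fun y => ¬ B y) P := rfl
        rw [e0, phi_append, phi_append, hphifilB, length_fil,
          phi_cons, phi_nil, cnt_cons, cnt_nil, if_neg hnAfg,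
          cnt_append, cnt_cons, cnt_nil, if_neg hnAfg, hcntfilnB]
        simp only [List.length_singleton]
        ring
      have hphibound := phi_fil_bound (A f) B P hchi
      have hphiM2gt : phi (A f) (P ++ [g]) + 1 ≤ phi (A f) M2 := by
        rw [hphiKs, hphiM2]
        omega
      have hFle := hKsmax M2 (hM2perm.trans hKsperm)
      rw [hF] at hFle
      simp only at hFle
      rw [hwtM2] at hFle
      omega
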